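/- Let R ≥ 1, N ≥ 1, let a_1, …, a_N ≥ 2 be integers, and let λ_{m i} (1 ≤ m ≤ N, 1 ≤ i ≤ R) be reals. Let L(v) = ∑_{m=1}^N ∑_{j=1}^R λ_{m j} v_j^{a_m+1} and let G(v)_i = ∑_{m=1}^N λ_{m i} v_i^{a_m} − v_i L(v). Then along any differentiable solution v : [0,∞) → ℝ^R of dv/dt = G(v), the squared norm S(t) = ∑_{i=1}^R v_i(t)^2 satisfies (1/2) dS/dt = L(v(t)) (1 − S(t)) for all t ≥ 0. -/

import Mathlib

open Filter Topology

/-- Along any solution of the multi-term loading dynamics, the squared norm `S`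
satisfies `(1/2) dS/dt = L(v) (1 - S)`, i.e. `dS/dt = 2 L(v) (1 - S)`. -/
theorem stmt10 (R N : ℕ) (hR : 1 ≤ R) (hN : 1 ≤ N)
    (a : Fin N → ℕ) (ha : ∀ m, 2 ≤ a m)
    (lam : Fin N → Fin R → ℝ)
    (v : ℝ → Fin R → ℝ)
    (hode : ∀ t ≥ (0 : ℝ), ∀ i,
      HasDerivAt (fun s => v s i)
        ((∑ m, lam m i * (v t i) ^ (a m))
          - v t i * ∑ m, ∑ j, lam m j * (v t j) ^ (a m + 1)) t) :
    ∀ t ≥ (0 : ℝ),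
      HasDerivAt (fun s => ∑ i, (v s i) ^ 2)
        (2 * ((∑ m, ∑ j, lam m j * (v t j) ^ (a m + 1)) * (1 - ∑ i, (v t i) ^ 2))) t := by
  intro t ht
  set L := ∑ m, ∑ j, lam m j * (v t j) ^ (a m + 1) with hL
  have h : HasDerivAt (fun s => ∑ i, (v s i) ^ 2)
      (∑ i, 2 * v t i * ((∑ m, lam m i * (v t i) ^ (a m)) - v t i * L)) t := by
    apply HasDerivAt.fun_sum
    intro i _
    have := (hode t ht i).fun_pow 2
    simpa [mul_comm, mul_assoc, mul_left_comm] using this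
  convert h using 1
  have key : ∀ i, 2 * v t i * ((∑ m, lam m i * (v t i) ^ (a m)) - v t i * L)
      = (∑ m, 2 * (lam m i * (v t i) ^ (a m + 1))) - 2 * L * (v t i) ^ 2 := by
    intro i
    rw [mul_sub]
    congr 1
    · rw [Finset.mul_sum]
      refine Finset.sum_congr rfl fun m _ => ?_
      ring
    · ring
  rw [Finset.sum_congr rfl fun i _ => key i, Finset.sum_sub_distrib,
    ← Finset.mul_sum]
  rw [Finset.sum_comm]
  simp only [← Finset.mul_sum]
  ring
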